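/- For η > 0 with η ≈ 0, the equation x/(x + η − 1) = log((x + η − 1)/η) in x > 1 has solution x* = 1 − η + η·e^{1 + W((1−η)/(ηe))}, where W is the principal branch of the Lambert W function. -/
import Mathlib


theorem stmt_13 (W : ℝ → ℝ)
    (hW : ∀ z : ℝ, 0 ≤ z → 0 ≤ W z ∧ W z * Real.exp (W z) = z)
    (η : ℝ) (hη : 0 < η) (hη1 : η < 1) :
    let x := 1 - η + η * Real.exp (1 + W ((1 - η) / (η * Real.exp 1)))
    1 < x ∧ x / (x + η - 1) = Real.log ((x + η - 1) / η) := by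
  intro x
  set z := (1 - η) / (η * Real.exp 1) with hzdef
  have h1η : 0 < 1 - η := by linarith
  have hez : 0 < η * Real.exp 1 := by positivity
  have hz0 : 0 ≤ z := le_of_lt (div_pos h1η hez)
  obtain ⟨hw0, hwe⟩ := hW z hz0
  set w := W z with hwdef
  have key : 1 - η = w * η * Real.exp (1 + w) := by
    have : w * Real.exp w * (η * Real.exp 1) = 1 - η := by
      rw [hwe, hzdef]
      field_simp
    rw [← this, Real.exp_add]
    ring
  have hx : x = (1 + w) * (η * Real.exp (1 + w)) := by
    show 1 - η + η * Real.exp (1 + w) = _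
    rw [key]; ring
  have hx1 : x + η - 1 = η * Real.exp (1 + w) := by
    show 1 - η + η * Real.exp (1 + w) + η - 1 = _
    ring
  have hpos : 0 < η * Real.exp (1 + w) := by positivity
  constructor
  · have hE : 1 < Real.exp (1 + w) := by
      have := Real.add_one_le_exp (1 + w)
      linarith
    show 1 < 1 - η + η * Real.exp (1 + w)
    nlinarith
  · rw [hx1, hx, mul_div_assoc, div_self (ne_of_gt hpos), mul_one,
      mul_comm η (Real.exp (1 + w)), mul_div_assoc, div_self (ne_of_gt hη),
      mul_one, Real.log_exp]
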